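/- arXiv:1304.3498 — 2 statements merged into one kernel-verified Lean document; each statement's English description precedes it below -/
import Mathlib

section
/- Suppose p_t(0,w) ≤ A·t^{-1}·exp(−|w|²/(A t)) for all t ≥ |w|, and p_t(0,w) ≤ p_r(0,w) for t ≤ r = |w| when r ≥ A, where A ≥ 10. Then for b ≥ 8A and any w with |w| ≥ b/4, ∫_0^{b²} p_t(0,w) dt ≤ c·A·log A for a universal constant c. -/
open MeasureTheory intervalIntegral

lemma my_integral_mono_Ioc {a b : ℝ} (hab : a ≤ b) {f g : ℝ → ℝ}
    (hf : IntervalIntegrable f volume a b) (hg : IntervalIntegrable g volume a b)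
    (h : ∀ t ∈ Set.Ioc a b, f t ≤ g t) :
    (∫ t in a..b, f t) ≤ ∫ t in a..b, g t := by
  rw [intervalIntegral.integral_of_le hab, intervalIntegral.integral_of_le hab]
  exact setIntegral_mono_on ((intervalIntegrable_iff_integrableOn_Ioc_of_le hab).mp hf)
    ((intervalIntegrable_iff_integrableOn_Ioc_of_le hab).mp hg) measurableSet_Ioc h

lemma my_exp_neg_le {x : ℝ} (hx : 0 < x) : Real.exp (-x) ≤ 4 / x ^ 2 := by
  have h1 : x / 2 + 1 ≤ Real.exp (x / 2) := Real.add_one_le_exp _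
  have hs : Real.exp (x / 2) * Real.exp (x / 2) = Real.exp x := by
    rw [← Real.exp_add]; ring_nf
  have h2 : x ^ 2 / 4 ≤ Real.exp x := by nlinarith [Real.exp_pos (x / 2)]
  have h3 : (0 : ℝ) < x ^ 2 / 4 := by positivity
  rw [Real.exp_neg]
  calc (Real.exp x)⁻¹ ≤ (x ^ 2 / 4)⁻¹ := by gcongr
    _ = 4 / x ^ 2 := by field_simp

set_option maxHeartbeats 1600000 in
/-- Occupation time bound: if `p t ≤ A t⁻¹ exp(−r²/(At))` for `t ≥ r` and
`p t ≤ p r` for `0 < t ≤ r`, with `A ≥ 10`, `b ≥ 8A`, `r ≥ b/4`, then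
`∫_0^{b²} p t dt ≤ c A log A` for a universal constant `c`. -/
theorem stmt_12 :
    ∃ c : ℝ, 0 < c ∧
      ∀ (A b r : ℝ) (p : ℝ → ℝ),
        10 ≤ A → 8 * A ≤ b → b / 4 ≤ r →
        (∀ t, 0 < t → 0 ≤ p t) →
        (∀ t, r ≤ t → p t ≤ A / t * Real.exp (-(r ^ 2) / (A * t))) →
        (∀ t, 0 < t → t ≤ r → p t ≤ p r) →
        IntervalIntegrable p volume 0 (b ^ 2) →
        (∫ t in (0 : ℝ)..(b ^ 2), p t) ≤ c * A * Real.log A := by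
  refine ⟨10, by norm_num, ?_⟩
  intro A b r p hA hb hr hpos hgauss hmono hInt
  have hA0 : (0 : ℝ) < A := by linarith
  have hb0 : (0 : ℝ) < b := by linarith
  have hr0 : (0 : ℝ) < r := by linarith
  have hb2 : (0 : ℝ) < b ^ 2 := by positivity
  have hlog1 : 1 ≤ Real.log A := by
    rw [Real.le_log_iff_exp_le hA0]
    have := Real.exp_one_lt_d9
    linarith
  -- p r bounds
  have hprexp : p r ≤ A / r * Real.exp (-(r ^ 2) / (A * r)) := hgauss r le_rfl
  have hexple1 : ∀ x : ℝ, x ≤ 0 → Real.exp x ≤ 1 := by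
    intro x hx
    calc Real.exp x ≤ Real.exp 0 := Real.exp_le_exp.mpr hx
      _ = 1 := Real.exp_zero
  have hpr : p r ≤ A / r := by
    have h1 : Real.exp (-(r ^ 2) / (A * r)) ≤ 1 := by
      apply hexple1
      apply div_nonpos_of_nonpos_of_nonneg
      · nlinarith
      · positivity
    calc p r ≤ A / r * Real.exp (-(r ^ 2) / (A * r)) := hprexp
      _ ≤ A / r * 1 := by
          apply mul_le_mul_of_nonneg_left h1
          positivity
      _ = A / r := mul_one _
  -- integrability on subintervals
  have subInt : ∀ a' b' : ℝ, 0 ≤ a' → b' ≤ b ^ 2 → a' ≤ b' →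
      IntervalIntegrable p volume a' b' := by
    intro a' b' h1 h2 h3
    apply hInt.mono_set
    rw [Set.uIcc_of_le h3, Set.uIcc_of_le (le_of_lt hb2)]
    exact Set.Icc_subset_Icc h1 h2
  -- pointwise bound p t ≤ A * (1/t) for r ≤ t
  have hAt : ∀ t : ℝ, r ≤ t → p t ≤ A * (1 / t) := by
    intro t ht
    have ht0 : 0 < t := lt_of_lt_of_le hr0 ht
    have h1 : Real.exp (-(r ^ 2) / (A * t)) ≤ 1 := by
      apply hexple1
      apply div_nonpos_of_nonpos_of_nonneg
      · nlinarith
      · positivity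
    calc p t ≤ A / t * Real.exp (-(r ^ 2) / (A * t)) := hgauss t ht
      _ ≤ A / t * 1 := by
          apply mul_le_mul_of_nonneg_left h1
          positivity
      _ = A * (1 / t) := by field_simp
  by_cases hcase : b ^ 2 ≤ r
  · -- whole interval: p t ≤ p r ≤ A / r ≤ A / b²
    have hmain : (∫ t in (0 : ℝ)..(b ^ 2), p t) ≤ ∫ t in (0 : ℝ)..(b ^ 2), A / b ^ 2 := by
      apply my_integral_mono_Ioc (le_of_lt hb2) hInt intervalIntegrable_const
      intro t ht
      calc p t ≤ p r := hmono t ht.1 (le_trans ht.2 hcase)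
        _ ≤ A / r := hpr
        _ ≤ A / b ^ 2 := by gcongr
    have hconst : (∫ t in (0 : ℝ)..(b ^ 2), A / b ^ 2) = A := by
      rw [intervalIntegral.integral_const, smul_eq_mul, sub_zero]
      field_simp
    nlinarith [hmain, hconst.symm ▸ hmain]
  · push_neg at hcase
    -- split at r
    have hint1 : IntervalIntegrable p volume 0 r := subInt 0 r le_rfl hcase.le hr0.le
    have hint2 : IntervalIntegrable p volume r (b ^ 2) := subInt r (b ^ 2) hr0.le le_rfl hcase.le
    have hsplit : (∫ t in (0 : ℝ)..(b ^ 2), p t)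
        = (∫ t in (0 : ℝ)..r, p t) + ∫ t in r..(b ^ 2), p t :=
      (intervalIntegral.integral_add_adjacent_intervals hint1 hint2).symm
    -- first piece ≤ A
    have hpiece1 : (∫ t in (0 : ℝ)..r, p t) ≤ A := by
      have h1 : (∫ t in (0 : ℝ)..r, p t) ≤ ∫ t in (0 : ℝ)..r, A / r := by
        apply my_integral_mono_Ioc hr0.le hint1 intervalIntegrable_const
        intro t ht
        calc p t ≤ p r := hmono t ht.1 ht.2
          _ ≤ A / r := hpr
      have h2 : (∫ t in (0 : ℝ)..r, A / r) = A := by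
        rw [intervalIntegral.integral_const, smul_eq_mul, sub_zero]
        field_simp
      linarith [h2 ▸ h1]
    -- integrability of A * (1/t) on [x, b²] for 0 < x
    have hintdiv : ∀ x : ℝ, 0 < x → x ≤ b ^ 2 →
        IntervalIntegrable (fun t => A * (1 / t)) volume x (b ^ 2) := by
      intro x hx hxb
      apply ContinuousOn.intervalIntegrable
      apply ContinuousOn.mul continuousOn_const
      apply ContinuousOn.div continuousOn_const continuousOn_id
      intro y hy
      rw [Set.uIcc_of_le hxb] at hy
      exact ne_of_gt (lt_of_lt_of_le hx hy.1)
    -- tail integral bound: for x with 0 < x ≤ b², b²/x ≤ 16 A gives bound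
    have htail : ∀ x : ℝ, r ≤ x → 0 < x → x ≤ b ^ 2 → b ^ 2 / x ≤ 16 * A →
        (∫ t in x..(b ^ 2), p t) ≤ 3 * A * Real.log A := by
      intro x hrx hx hxb hxA
      have h0 : (0 : ℝ) ∉ Set.uIcc x (b ^ 2) := by
        rw [Set.uIcc_of_le hxb]
        intro h
        exact absurd h.1 (not_le.mpr hx)
      have h1 : (∫ t in x..(b ^ 2), p t) ≤ ∫ t in x..(b ^ 2), A * (1 / t) := by
        apply my_integral_mono_Ioc hxb (subInt x (b ^ 2) hx.le le_rfl hxb)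
          (hintdiv x hx hxb)
        intro t ht
        exact hAt t (le_trans hrx ht.1.le)
      have h2 : (∫ t in x..(b ^ 2), A * (1 / t)) = A * Real.log (b ^ 2 / x) := by
        rw [intervalIntegral.integral_const_mul, integral_one_div h0]
      have h3 : Real.log (b ^ 2 / x) ≤ Real.log (16 * A) := by
        apply Real.log_le_log (by positivity) hxA
      have h4 : Real.log (16 * A) ≤ 3 * Real.log A := by
        have h5 : (16 : ℝ) * A ≤ A ^ 3 := by
          have h100 : (100 : ℝ) ≤ A ^ 2 := by nlinarith
          nlinarith
        calc Real.log (16 * A) ≤ Real.log (A ^ 3) :=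
              Real.log_le_log (by positivity) h5
          _ = 3 * Real.log A := by rw [Real.log_pow]; norm_num
      calc (∫ t in x..(b ^ 2), p t) ≤ A * Real.log (b ^ 2 / x) := h2 ▸ h1
        _ ≤ A * (3 * Real.log A) := by
            apply mul_le_mul_of_nonneg_left (le_trans h3 h4) hA0.le
        _ = 3 * A * Real.log A := by ring
    by_cases hT : b ^ 2 / (16 * A) ≤ r
    · -- no middle piece needed
      have h1 : b ^ 2 / r ≤ 16 * A := by
        rw [div_le_iff₀ hr0]
        rw [div_le_iff₀ (by positivity : (0:ℝ) < 16 * A)] at hT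
        linarith
      have h2 := htail r le_rfl hr0 hcase.le h1
      rw [hsplit]
      nlinarith [hpiece1, h2, hlog1, hA0]
    · push_neg at hT
      set T := b ^ 2 / (16 * A) with hTdef
      have hT0 : 0 < T := by positivity
      have hTb : T ≤ b ^ 2 := by
        rw [hTdef, div_le_iff₀ (by positivity : (0:ℝ) < 16 * A)]
        nlinarith
      -- split [r, b²] at T
      have hintrT : IntervalIntegrable p volume r T := subInt r T hr0.le hTb hT.le
      have hintTb : IntervalIntegrable p volume T (b ^ 2) := subInt T (b ^ 2) hT0.le le_rfl hTb
      have hsplit2 : (∫ t in r..(b ^ 2), p t)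
          = (∫ t in r..T, p t) + ∫ t in T..(b ^ 2), p t :=
        (intervalIntegral.integral_add_adjacent_intervals hintrT hintTb).symm
      -- middle piece: p t ≤ 1024 A³ t / b⁴ on (r, T]
      have hmid : (∫ t in r..T, p t) ≤ 2 * A := by
        have hptw : ∀ t ∈ Set.Ioc r T, p t ≤ 1024 * A ^ 3 / b ^ 4 * t := by
          intro t ht
          have ht0 : 0 < t := lt_trans hr0 ht.1
          have hx0 : 0 < b ^ 2 / (16 * A * t) := by positivity
          have hexp1 : Real.exp (-(r ^ 2) / (A * t)) ≤ Real.exp (-(b ^ 2 / (16 * A * t))) := by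
            apply Real.exp_le_exp.mpr
            rw [neg_div, neg_le_neg_iff]
            rw [div_le_div_iff₀ (by positivity) (by positivity)]
            have h16 : b ^ 2 ≤ 16 * r ^ 2 := by nlinarith
            nlinarith [mul_le_mul_of_nonneg_right h16 (mul_pos hA0 ht0).le]
          have hexp2 : Real.exp (-(b ^ 2 / (16 * A * t))) ≤ 4 / (b ^ 2 / (16 * A * t)) ^ 2 :=
            my_exp_neg_le hx0
          calc p t ≤ A / t * Real.exp (-(r ^ 2) / (A * t)) := hgauss t ht.1.le
            _ ≤ A / t * (4 / (b ^ 2 / (16 * A * t)) ^ 2) := by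
                apply mul_le_mul_of_nonneg_left (le_trans hexp1 hexp2) (by positivity)
            _ = 1024 * A ^ 3 / b ^ 4 * t := by
                field_simp
                ring
        have hintlin : IntervalIntegrable (fun t => 1024 * A ^ 3 / b ^ 4 * t) volume r T := by
          apply ContinuousOn.intervalIntegrable
          exact (continuousOn_const.mul continuousOn_id)
        have h1 : (∫ t in r..T, p t) ≤ ∫ t in r..T, 1024 * A ^ 3 / b ^ 4 * t :=
          my_integral_mono_Ioc hT.le hintrT hintlin hptw
        have h2 : (∫ t in r..T, 1024 * A ^ 3 / b ^ 4 * t)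
            = 1024 * A ^ 3 / b ^ 4 * ((T ^ 2 - r ^ 2) / 2) := by
          rw [intervalIntegral.integral_const_mul, integral_id]
        have h3 : 1024 * A ^ 3 / b ^ 4 * ((T ^ 2 - r ^ 2) / 2) ≤ 2 * A := by
          have hTb4 : 256 * A ^ 2 * T ^ 2 = b ^ 4 := by
            rw [hTdef]
            field_simp
            ring
          rw [div_mul_eq_mul_div, div_le_iff₀ (by positivity : (0:ℝ) < b ^ 4)]
          have h2Ab : 2 * A * b ^ 4 = 512 * A ^ 3 * T ^ 2 := by rw [← hTb4]; ring
          nlinarith [h2Ab, mul_nonneg (pow_nonneg hA0.le 3) (sq_nonneg r)]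
        rw [h2] at h1
        linarith
      -- tail piece
      have h1 : b ^ 2 / T ≤ 16 * A := by
        rw [hTdef]
        rw [div_div_eq_mul_div, div_le_iff₀ hb2]
        exact le_of_eq (by ring)
      have htail2 := htail T hT.le hT0 hTb h1
      rw [hsplit, hsplit2]
      nlinarith [hpiece1, hmid, htail2, hlog1, hA0]
end

section
/- Let m_n = a_n/a_{n-1} and suppose h : B → ℝ is a function on the square B = [0,a]² ∩ ℤ² with h(x,0)=0, h(x,a)=1, extended periodically in the first coordinate. Define f on [0, m·a]² ∩ ℤ² by f(x₁, x₂) = (k + h(x₁, x₂ − k·a))/m for k·a ≤ x₂ ≤ (k+1)·a, 0 ≤ k ≤ m − 1. Then for any edge weights ν on edges of [0,a]² extended periodically with period a in both coordinates, the Dirichlet energy of f on the big square equals m² · (1/m²) · E(h,h) = E(h,h), where E(h,h) = (1/2) Σ_{x∼y} ν_{xy}(h(y)−h(x))² is the energy of h on one period square (with boundary-edge weights halved to avoid double counting). -/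
open Finset

/-- The Dirichlet energy of `f` over the period cell `[0,N)²`, counting each edge of
the periodic lattice once per period (equivalently, with boundary edge weights
halved to avoid double counting): sum over horizontal and vertical edges issued
from points of `[0,N)² ∩ ℤ²`. -/
def cellEnergy (ν : ℤ × ℤ → ℤ × ℤ → ℝ) (f : ℤ × ℤ → ℝ) (N : ℕ) : ℝ :=
  ∑ x ∈ Finset.range N, ∑ y ∈ Finset.range N,
    (ν ((x : ℤ), (y : ℤ)) ((x : ℤ) + 1, (y : ℤ)) *
        (f ((x : ℤ) + 1, (y : ℤ)) - f ((x : ℤ), (y : ℤ))) ^ 2 +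
      ν ((x : ℤ), (y : ℤ)) ((x : ℤ), (y : ℤ) + 1) *
        (f ((x : ℤ), (y : ℤ) + 1) - f ((x : ℤ), (y : ℤ))) ^ 2)

lemma sum_range_mul' {M : Type*} [AddCommMonoid M] (m a : ℕ) (g : ℕ → M) :
    ∑ x ∈ Finset.range (m * a), g x
      = ∑ i ∈ Finset.range m, ∑ j ∈ Finset.range a, g (i * a + j) := by
  induction m with
  | zero => simp
  | succ n ih =>
    rw [Nat.succ_mul, Finset.sum_range_add, ih, Finset.sum_range_succ]


/-- Pasting `m²` scaled copies of `h` (scaled by `1/m`, shifted by `k/m`) into the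
tiling of `[0, m·a]²` by period-`a` squares yields total energy
`m² · (1/m²) · E(h,h) = E(h,h)`, for any edge weights `ν` periodic with period `a`
in both coordinates, when `h(·,0) = 0`, `h(·,a) = 1` and `h` is horizontally
`a`-periodic. -/
theorem stmt_16 (a m : ℕ) (ha : 1 ≤ a) (hm : 1 ≤ m)
    (h : ℤ × ℤ → ℝ)
    (hbot : ∀ x : ℤ, h (x, 0) = 0) (htop : ∀ x : ℤ, h (x, (a : ℤ)) = 1)
    (hper : ∀ x y : ℤ, h (x + (a : ℤ), y) = h (x, y))
    (ν : ℤ × ℤ → ℤ × ℤ → ℝ)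
    (hνper : ∀ p q v : ℤ × ℤ, ν (p + (a : ℤ) • v) (q + (a : ℤ) • v) = ν p q)
    (f : ℤ × ℤ → ℝ)
    (hf : ∀ (x₁ x₂ : ℤ) (k : ℕ), k < m → (k : ℤ) * a ≤ x₂ → x₂ ≤ ((k : ℤ) + 1) * a →
      f (x₁, x₂) = ((k : ℝ) + h (x₁, x₂ - (k : ℤ) * a)) / m) :
    cellEnergy ν f (m * a) = cellEnergy ν h a := by
  have hm0 : (m : ℝ) ≠ 0 := Nat.cast_ne_zero.mpr (by omega)
  -- value of f on block k
  have hval : ∀ (k : ℕ), k < m → ∀ (x y : ℤ), 0 ≤ y → y ≤ a →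
      f (x, (k : ℤ) * a + y) = ((k : ℝ) + h (x, y)) / m := by
    intro k hk x y hy0 hya
    have e := hf x ((k : ℤ) * a + y) k hk (by linarith) (by push_cast; linarith)
    have e2 : (k : ℤ) * a + y - (k : ℤ) * a = y := by ring
    rw [e2] at e
    exact e
  -- horizontal periodicity of h, iterated
  have hperN : ∀ (i : ℕ) (x y : ℤ), h (x + (i : ℤ) * a, y) = h (x, y) := by
    intro i
    induction i with
    | zero => simp
    | succ n ih =>
      intro x y
      have : x + ((n : ℤ) + 1) * a = (x + (n : ℤ) * a) + a := by ring
      push_cast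
      rw [this, hper, ih]
  -- ν periodicity, componentwise form
  have hν : ∀ (i k : ℕ) (p q : ℤ × ℤ),
      ν (p.1 + (i : ℤ) * a, p.2 + (k : ℤ) * a) (q.1 + (i : ℤ) * a, q.2 + (k : ℤ) * a)
        = ν p q := by
    intro i k p q
    rcases p with ⟨p1, p2⟩; rcases q with ⟨q1, q2⟩
    have := hνper (p1, p2) (q1, q2) ((i : ℤ), (k : ℤ))
    simpa [Prod.ext_iff, Prod.smul_mk, smul_eq_mul, mul_comm] using this
  unfold cellEnergy
  rw [sum_range_mul' m a]
  have swap1 : ∀ i ∈ Finset.range m, ∀ x ∈ Finset.range a,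
      (∑ y ∈ Finset.range (m * a),
        (ν (((i*a+x : ℕ) : ℤ), (y : ℤ)) (((i*a+x : ℕ) : ℤ) + 1, (y : ℤ)) *
            (f (((i*a+x : ℕ) : ℤ) + 1, (y : ℤ)) - f (((i*a+x : ℕ) : ℤ), (y : ℤ))) ^ 2 +
          ν (((i*a+x : ℕ) : ℤ), (y : ℤ)) (((i*a+x : ℕ) : ℤ), (y : ℤ) + 1) *
            (f (((i*a+x : ℕ) : ℤ), (y : ℤ) + 1) - f (((i*a+x : ℕ) : ℤ), (y : ℤ))) ^ 2))
      = ∑ k ∈ Finset.range m, ∑ y ∈ Finset.range a,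
          (1 / (m : ℝ) ^ 2) *
          (ν ((x : ℤ), (y : ℤ)) ((x : ℤ) + 1, (y : ℤ)) *
              (h ((x : ℤ) + 1, (y : ℤ)) - h ((x : ℤ), (y : ℤ))) ^ 2 +
            ν ((x : ℤ), (y : ℤ)) ((x : ℤ), (y : ℤ) + 1) *
              (h ((x : ℤ), (y : ℤ) + 1) - h ((x : ℤ), (y : ℤ))) ^ 2) := by
    intro i hi x hx
    rw [sum_range_mul' m a]
    refine Finset.sum_congr rfl fun k hk => Finset.sum_congr rfl fun y hy => ?_
    simp only [Finset.mem_range] at hi hk hx hy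
    -- coordinate rewrites
    have cx : ((i * a + x : ℕ) : ℤ) = (x : ℤ) + (i : ℤ) * a := by push_cast; ring
    have cy : ((k * a + y : ℕ) : ℤ) = (k : ℤ) * a + (y : ℤ) := by push_cast; ring
    rw [cx, cy]
    have f1 : f ((x : ℤ) + (i : ℤ) * a + 1, (k : ℤ) * a + (y : ℤ))
        = ((k : ℝ) + h ((x : ℤ) + 1, (y : ℤ))) / m := by
      rw [hval k hk _ _ (by positivity) (by exact_mod_cast (le_of_lt hy))]
      have : (x : ℤ) + (i : ℤ) * a + 1 = ((x : ℤ) + 1) + (i : ℤ) * a := by ring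
      rw [this, hperN]
    have f2 : f ((x : ℤ) + (i : ℤ) * a, (k : ℤ) * a + (y : ℤ))
        = ((k : ℝ) + h ((x : ℤ), (y : ℤ))) / m := by
      rw [hval k hk _ _ (by positivity) (by exact_mod_cast (le_of_lt hy))]
      rw [hperN]
    have f3 : f ((x : ℤ) + (i : ℤ) * a, (k : ℤ) * a + (y : ℤ) + 1)
        = ((k : ℝ) + h ((x : ℤ), (y : ℤ) + 1)) / m := by
      have cc : (k : ℤ) * a + (y : ℤ) + 1 = (k : ℤ) * a + ((y : ℤ) + 1) := by ring
      rw [cc, hval k hk _ _ (by positivity) (by exact_mod_cast hy)]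
      rw [hperN]
    have ν1 : ν ((x : ℤ) + (i : ℤ) * a, (k : ℤ) * a + (y : ℤ))
        ((x : ℤ) + (i : ℤ) * a + 1, (k : ℤ) * a + (y : ℤ))
        = ν ((x : ℤ), (y : ℤ)) ((x : ℤ) + 1, (y : ℤ)) := by
      have := hν i k ((x : ℤ), (y : ℤ)) ((x : ℤ) + 1, (y : ℤ))
      simp only at this
      rw [← this]
      ring_nf
    have ν2 : ν ((x : ℤ) + (i : ℤ) * a, (k : ℤ) * a + (y : ℤ))
        ((x : ℤ) + (i : ℤ) * a, (k : ℤ) * a + (y : ℤ) + 1)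
        = ν ((x : ℤ), (y : ℤ)) ((x : ℤ), (y : ℤ) + 1) := by
      have := hν i k ((x : ℤ), (y : ℤ)) ((x : ℤ), (y : ℤ) + 1)
      simp only at this
      rw [← this]
      ring_nf
    rw [f1, f2, f3, ν1, ν2]
    field_simp
    try ring
  trans (∑ i ∈ Finset.range m, ∑ x ∈ Finset.range a, ∑ k ∈ Finset.range m,
      ∑ y ∈ Finset.range a, (1 / (m : ℝ) ^ 2) *
      (ν ((x : ℤ), (y : ℤ)) ((x : ℤ) + 1, (y : ℤ)) *
          (h ((x : ℤ) + 1, (y : ℤ)) - h ((x : ℤ), (y : ℤ))) ^ 2 +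
        ν ((x : ℤ), (y : ℤ)) ((x : ℤ), (y : ℤ) + 1) *
          (h ((x : ℤ), (y : ℤ) + 1) - h ((x : ℤ), (y : ℤ))) ^ 2))
  · exact Finset.sum_congr rfl fun i hi => Finset.sum_congr rfl fun x hx => swap1 i hi x hx
  · simp only [Finset.sum_const, Finset.card_range, nsmul_eq_mul]
    simp only [← Finset.mul_sum]
    field_simp
    try ring
end
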